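/- Let μ, C, S, c be real numbers with K := C² + S² − μ² > 0 and μ ≠ S. Define α : ℝ → ℝ by α(t) = 2·arctan( (C − √K · tanh(√K·(t + c)/2)) / (μ − S) ). Then α is differentiable on ℝ and for every t, α'(t) = μ + S·cos(α(t)) − C·sin(α(t)). -/

import Mathlib

private lemma myHasDerivAt_tanh (x : ℝ) :
    HasDerivAt Real.tanh (1 / Real.cosh x ^ 2) x := by
  have h := (Real.hasDerivAt_sinh x).div (Real.hasDerivAt_cosh x) (Real.cosh_pos x).ne'
  have he : (Real.cosh x * Real.cosh x - Real.sinh x * Real.sinh x) / Real.cosh x ^ 2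
      = 1 / Real.cosh x ^ 2 := by
    have h2 := Real.cosh_sq_sub_sinh_sq x
    rw [show Real.cosh x * Real.cosh x - Real.sinh x * Real.sinh x
        = Real.cosh x ^ 2 - Real.sinh x ^ 2 by ring, h2]
  rw [← he]
  exact h.congr_of_eventuallyEq
    (Filter.Eventually.of_forall fun y => (Real.tanh_eq_sinh_div_cosh y))

private lemma key_algebra (μ C S k T x : ℝ) (hm : μ - S ≠ 0)
    (hk2 : k ^ 2 = C ^ 2 + S ^ 2 - μ ^ 2)
    (hxm : (μ - S) * x = C - k * T) :
    2 * (1 / (1 + x ^ 2) * (-(k * ((1 - T ^ 2) * (k / 2))) / (μ - S)))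
      = μ + S * ((1 - x ^ 2) / (1 + x ^ 2)) - C * (2 * x / (1 + x ^ 2)) := by
  have h1x : (1:ℝ) + x ^ 2 ≠ 0 := by positivity
  have key2 : -(k ^ 2 * (1 - T ^ 2))
      = (μ * (1 + x ^ 2) + S * (1 - x ^ 2) - 2 * C * x) * (μ - S) := by
    linear_combination (-1 : ℝ) * hk2 - ((μ - S) * x + (C - k * T) - 2 * C) * hxm
  calc 2 * (1 / (1 + x ^ 2) * (-(k * ((1 - T ^ 2) * (k / 2))) / (μ - S)))
      = (-(k ^ 2 * (1 - T ^ 2)) / (μ - S)) / (1 + x ^ 2) := by ring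
    _ = ((μ * (1 + x ^ 2) + S * (1 - x ^ 2) - 2 * C * x) * (μ - S) / (μ - S)) / (1 + x ^ 2) := by
        rw [key2]
    _ = (μ * (1 + x ^ 2) + S * (1 - x ^ 2) - 2 * C * x) / (1 + x ^ 2) := by
        rw [mul_div_assoc, div_self hm, mul_one]
    _ = μ + S * ((1 - x ^ 2) / (1 + x ^ 2)) - C * (2 * x / (1 + x ^ 2)) := by
        field_simp

private lemma cos_two_arctan (x : ℝ) :
    Real.cos (2 * Real.arctan x) = (1 - x ^ 2) / (1 + x ^ 2) := by
  have h1x : (0:ℝ) < 1 + x ^ 2 := by positivity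
  have hs : Real.sqrt (1 + x ^ 2) ^ 2 = 1 + x ^ 2 := Real.sq_sqrt h1x.le
  rw [Real.cos_two_mul, Real.cos_arctan, div_pow, one_pow, hs]
  field_simp
  ring

private lemma sin_two_arctan (x : ℝ) :
    Real.sin (2 * Real.arctan x) = 2 * x / (1 + x ^ 2) := by
  have h1x : (0:ℝ) < 1 + x ^ 2 := by positivity
  have hs : Real.sqrt (1 + x ^ 2) * Real.sqrt (1 + x ^ 2) = 1 + x ^ 2 :=
    Real.mul_self_sqrt h1x.le
  have hsne : Real.sqrt (1 + x ^ 2) ≠ 0 := by positivity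
  rw [Real.sin_two_mul, Real.sin_arctan, Real.cos_arctan]
  field_simp
  rw [Real.sq_sqrt h1x.le]

/-- If K := C² + S² − μ² > 0 and μ ≠ S, then
α(t) = 2·arctan((C − √K·tanh(√K·(t+c)/2))/(μ − S)) is differentiable on ℝ and
satisfies α'(t) = μ + S·cos(α(t)) − C·sin(α(t)) for every t. -/
theorem tanh_solution_solves_ode (μ C S c : ℝ)
    (hK : 0 < C ^ 2 + S ^ 2 - μ ^ 2) (hμS : μ ≠ S)
    (α : ℝ → ℝ)
    (hα : ∀ t, α t = 2 * Real.arctan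
      ((C - Real.sqrt (C ^ 2 + S ^ 2 - μ ^ 2) *
        Real.tanh (Real.sqrt (C ^ 2 + S ^ 2 - μ ^ 2) * (t + c) / 2)) / (μ - S))) :
    Differentiable ℝ α ∧
      ∀ t, deriv α t = μ + S * Real.cos (α t) - C * Real.sin (α t) := by
  set k := Real.sqrt (C ^ 2 + S ^ 2 - μ ^ 2) with hkdef
  have hk2 : k ^ 2 = C ^ 2 + S ^ 2 - μ ^ 2 := Real.sq_sqrt hK.le
  have hm : μ - S ≠ 0 := sub_ne_zero.mpr hμS
  set u : ℝ → ℝ := fun t => (C - k * Real.tanh (k * (t + c) / 2)) / (μ - S) with hu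
  have hαfun : α = fun t => 2 * Real.arctan (u t) := funext hα
  have hdu : ∀ t, HasDerivAt u
      (-(k * (1 / Real.cosh (k * (t + c) / 2) ^ 2 * (k / 2))) / (μ - S)) t := by
    intro t
    have h1 : HasDerivAt (fun t : ℝ => k * (t + c) / 2) (k / 2) t := by
      simpa using (((hasDerivAt_id t).add_const c).const_mul k).div_const 2
    have h2 := (myHasDerivAt_tanh (k * (t + c) / 2)).comp t h1
    exact ((h2.const_mul k).const_sub C).div_const (μ - S)
  have hdα : ∀ t, HasDerivAt α
      (2 * (1 / (1 + u t ^ 2) *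
        (-(k * (1 / Real.cosh (k * (t + c) / 2) ^ 2 * (k / 2))) / (μ - S)))) t := by
    intro t
    rw [hαfun]
    exact ((Real.hasDerivAt_arctan (u t)).comp t (hdu t)).const_mul 2
  refine ⟨fun t => (hdα t).differentiableAt, fun t => ?_⟩
  rw [(hdα t).deriv, hα t, cos_two_arctan, sin_two_arctan]
  have h1H : 1 / Real.cosh (k * (t + c) / 2) ^ 2
      = 1 - Real.tanh (k * (t + c) / 2) ^ 2 := by
    have hc := (Real.cosh_pos (k * (t + c) / 2)).ne'
    have h2 := Real.cosh_sq_sub_sinh_sq (k * (t + c) / 2)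
    rw [Real.tanh_eq_sinh_div_cosh]
    field_simp
    linarith
  rw [h1H]
  have hxm : (μ - S) * u t = C - k * Real.tanh (k * (t + c) / 2) := by
    rw [hu]
    field_simp
  exact key_algebra μ C S k (Real.tanh (k * (t + c) / 2)) (u t) hm hk2 hxm
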